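/- For p ∈ (0, π) and t ∈ (0, π), define f_p(t) = −(sin t − e^{p cos t} sin(t − p sin t))/(sin t − e^{−p cos t} sin(t + p sin t)). Then both the numerator and the denominator of −f_p are positive (indeed sin t − e^{±p cos t} sin(t ∓ p sin t) = ∫₀ᵖ e^{±q cos t} sin(q sin t) dq > 0), and f_p is strictly increasing on (0, π), with f_p′(t) = (sin(p sin t) − p sin t · cos(p sin t))·(e^{p cos t} + e^{−p cos t} − 2cos(p sin t)) / (sin t − e^{−p cos t} sin(t + p sin t))². -/

import Mathlib

noncomputable def opNorm (A : Matrix (Fin 2) (Fin 2) ℝ) : ℝ :=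
  ‖Matrix.toEuclideanCLM (𝕜 := ℝ) (n := Fin 2) A‖

noncomputable def conorm (A : Matrix (Fin 2) (Fin 2) ℝ) : ℝ :=
  Real.sign A.det * (opNorm A⁻¹)⁻¹

noncomputable def arcosh (x : ℝ) : ℝ := Real.log (x + Real.sqrt (x ^ 2 - 1))

noncomputable def AC (x : ℝ) : ℝ :=
  if x < 1 then Real.arccos x / Real.sqrt (1 - x ^ 2)
  else if x = 1 then 1
  else arcosh x / Real.sqrt (x ^ 2 - 1)

noncomputable def AS (x : ℝ) : ℝ :=
  if x = 1 then Real.sqrt (1 / 3) else Real.sqrt ((AC x ^ 2 - 1) / (1 - x ^ 2))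

noncomputable def AT (x : ℝ) : ℝ := (AC x - 1) / AS x

noncomputable def PDcenter (A : Matrix (Fin 2) (Fin 2) ℝ) : ℂ :=
  (((A 0 0 + A 1 1) / 2 : ℝ) : ℂ) + ((|A 1 0 - A 0 1| / 2 : ℝ) : ℂ) * Complex.I

noncomputable def PDradius (A : Matrix (Fin 2) (Fin 2) ℝ) : ℝ :=
  Real.sqrt (((A 0 0 - A 1 1) / 2) ^ 2 + ((A 0 1 + A 1 0) / 2) ^ 2)

noncomputable def PD (A : Matrix (Fin 2) (Fin 2) ℝ) : Set ℂ :=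
  Metric.closedBall (PDcenter A) (PDradius A)

def LogAble (A : Matrix (Fin 2) (Fin 2) ℝ) : Prop :=
  ∀ z ∈ spectrum ℂ (A.map (fun x => (x : ℂ))), ¬(z.im = 0 ∧ z.re ≤ 0)

def IsPrincipalLog (A L : Matrix (Fin 2) (Fin 2) ℝ) : Prop :=
  NormedSpace.exp L = A ∧
    ∀ z ∈ spectrum ℂ (L.map (fun x => (x : ℂ))), z.im ∈ Set.Ioo (-Real.pi) Real.pi

open Real Set intervalIntegral

lemma auxSinPos (x : ℝ) (hx : 0 < x) (hx' : x < Real.pi) :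
    0 < Real.sin x - x * Real.cos x := by
  have hg : ∀ y : ℝ, HasDerivAt (fun y => Real.sin y - y * Real.cos y) (y * Real.sin y) y := by
    intro y
    have h := (Real.hasDerivAt_sin y).sub ((hasDerivAt_id y).mul (Real.hasDerivAt_cos y))
    refine h.congr_deriv ?_
    symm
    simp only [id_eq]
    ring
  have hmono : StrictMonoOn (fun y => Real.sin y - y * Real.cos y) (Set.Icc 0 Real.pi) := by
    apply strictMonoOn_of_deriv_pos (convex_Icc 0 Real.pi)
    · exact (Real.continuous_sin.sub (continuous_id.mul Real.continuous_cos)).continuousOn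
    · intro y hy
      rw [interior_Icc] at hy
      rw [(hg y).deriv]
      exact mul_pos hy.1 (Real.sin_pos_of_pos_of_lt_pi hy.1 hy.2)
  have h0 : (0:ℝ) ∈ Set.Icc 0 Real.pi := ⟨le_refl 0, Real.pi_pos.le⟩
  have hxm : x ∈ Set.Icc 0 Real.pi := ⟨hx.le, hx'.le⟩
  have := hmono h0 hxm hx
  simpa using this

theorem stmt19 (p : ℝ) (hp : p ∈ Set.Ioo 0 Real.pi) (num den f : ℝ → ℝ)
    (hnum : ∀ t, num t = Real.sin t - Real.exp (p * Real.cos t) * Real.sin (t - p * Real.sin t))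
    (hden : ∀ t, den t = Real.sin t - Real.exp (-(p * Real.cos t)) * Real.sin (t + p * Real.sin t))
    (hf : ∀ t, f t = -(num t) / den t) :
    (∀ t ∈ Set.Ioo (0 : ℝ) Real.pi,
      (num t = ∫ q in (0 : ℝ)..p, Real.exp (q * Real.cos t) * Real.sin (q * Real.sin t)) ∧
      (den t = ∫ q in (0 : ℝ)..p, Real.exp (-(q * Real.cos t)) * Real.sin (q * Real.sin t)) ∧
      0 < num t ∧ 0 < den t ∧
      HasDerivAt f
        ((Real.sin (p * Real.sin t) - p * Real.sin t * Real.cos (p * Real.sin t)) *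
            (Real.exp (p * Real.cos t) + Real.exp (-(p * Real.cos t)) -
              2 * Real.cos (p * Real.sin t)) / (den t) ^ 2) t) ∧
    StrictMonoOn f (Set.Ioo (0 : ℝ) Real.pi) := by
  obtain ⟨hp0, hpπ⟩ := hp
  have main : ∀ t ∈ Set.Ioo (0 : ℝ) Real.pi,
      (num t = ∫ q in (0 : ℝ)..p, Real.exp (q * Real.cos t) * Real.sin (q * Real.sin t)) ∧
      (den t = ∫ q in (0 : ℝ)..p, Real.exp (-(q * Real.cos t)) * Real.sin (q * Real.sin t)) ∧
      0 < num t ∧ 0 < den t ∧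
      HasDerivAt f
        ((Real.sin (p * Real.sin t) - p * Real.sin t * Real.cos (p * Real.sin t)) *
            (Real.exp (p * Real.cos t) + Real.exp (-(p * Real.cos t)) -
              2 * Real.cos (p * Real.sin t)) / (den t) ^ 2) t := by
    intro t ht
    obtain ⟨ht0, htπ⟩ := ht
    have hst : 0 < Real.sin t := Real.sin_pos_of_pos_of_lt_pi ht0 htπ
    have hsc : Real.sin t ^ 2 + Real.cos t ^ 2 = 1 := Real.sin_sq_add_cos_sq t
    have hps : p * Real.sin t < Real.pi := lt_of_le_of_lt
      (by nlinarith [Real.sin_le_one t]) hpπ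
    have hps0 : 0 < p * Real.sin t := mul_pos hp0 hst
    -- integral for num
    have hnumInt : num t = ∫ q in (0:ℝ)..p,
        Real.exp (q * Real.cos t) * Real.sin (q * Real.sin t) := by
      have hd : ∀ q ∈ Set.uIcc (0:ℝ) p,
          HasDerivAt (fun q => -(Real.exp (q * Real.cos t) * Real.sin (t - q * Real.sin t)))
            (Real.exp (q * Real.cos t) * Real.sin (q * Real.sin t)) q := by
        intro q _
        have h1 : HasDerivAt (fun q : ℝ => q * Real.cos t) (Real.cos t) q :=
          hasDerivAt_mul_const _
        have h2 := h1.exp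
        have h3 : HasDerivAt (fun q : ℝ => t - q * Real.sin t) (0 - Real.sin t) q :=
          (hasDerivAt_const q t).sub (hasDerivAt_mul_const _)
        have h4 := h3.sin
        have h5 := (h2.mul h4).neg
        refine h5.congr_deriv ?_
        symm
        rw [Real.sin_sub t (q * Real.sin t), Real.cos_sub t (q * Real.sin t)]
        linear_combination (-(Real.exp (q * Real.cos t) * Real.sin (q * Real.sin t))) * hsc
      have hint : IntervalIntegrable
          (fun q => Real.exp (q * Real.cos t) * Real.sin (q * Real.sin t))
          MeasureTheory.volume 0 p :=
        (by fun_prop : Continuous fun q : ℝ =>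
          Real.exp (q * Real.cos t) * Real.sin (q * Real.sin t)).intervalIntegrable 0 p
      have := integral_eq_sub_of_hasDerivAt hd hint
      rw [this, hnum]
      simp [Real.exp_zero]
      ring
    have hdenInt : den t = ∫ q in (0:ℝ)..p,
        Real.exp (-(q * Real.cos t)) * Real.sin (q * Real.sin t) := by
      have hd : ∀ q ∈ Set.uIcc (0:ℝ) p,
          HasDerivAt (fun q => -(Real.exp (-(q * Real.cos t)) * Real.sin (t + q * Real.sin t)))
            (Real.exp (-(q * Real.cos t)) * Real.sin (q * Real.sin t)) q := by
        intro q _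
        have h1 : HasDerivAt (fun q : ℝ => -(q * Real.cos t)) (-Real.cos t) q :=
          (hasDerivAt_mul_const _).neg
        have h2 := h1.exp
        have h3 : HasDerivAt (fun q : ℝ => t + q * Real.sin t) (0 + Real.sin t) q :=
          (hasDerivAt_const q t).add (hasDerivAt_mul_const _)
        have h4 := h3.sin
        have h5 := (h2.mul h4).neg
        refine h5.congr_deriv ?_
        symm
        rw [Real.sin_add t (q * Real.sin t), Real.cos_add t (q * Real.sin t)]
        linear_combination (-(Real.exp (-(q * Real.cos t)) * Real.sin (q * Real.sin t))) * hsc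
      have hint : IntervalIntegrable
          (fun q => Real.exp (-(q * Real.cos t)) * Real.sin (q * Real.sin t))
          MeasureTheory.volume 0 p :=
        (by fun_prop : Continuous fun q : ℝ =>
          Real.exp (-(q * Real.cos t)) * Real.sin (q * Real.sin t)).intervalIntegrable 0 p
      have := integral_eq_sub_of_hasDerivAt hd hint
      rw [this, hden]
      simp [Real.exp_zero]
      ring
    -- positivity
    have hposOn : ∀ c' : ℝ, 0 < ∫ q in (0:ℝ)..p, Real.exp (q * c') * Real.sin (q * Real.sin t) := by
      intro c'
      apply intervalIntegral_pos_of_pos_on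
      · exact (by fun_prop : Continuous fun q : ℝ =>
          Real.exp (q * c') * Real.sin (q * Real.sin t)).intervalIntegrable 0 p
      · intro q hq
        apply mul_pos (Real.exp_pos _)
        apply Real.sin_pos_of_pos_of_lt_pi (mul_pos hq.1 hst)
        calc q * Real.sin t ≤ q * 1 := by nlinarith [Real.sin_le_one t, hq.1]
          _ = q := mul_one q
          _ < Real.pi := lt_trans hq.2 hpπ
      · exact hp0
    have hnumPos : 0 < num t := by
      rw [hnumInt]; exact hposOn (Real.cos t)
    have hdenPos : 0 < den t := by
      rw [hdenInt]
      have := hposOn (-Real.cos t)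
      simp only [mul_neg] at this
      exact this
    -- derivatives
    have hnum' : HasDerivAt num
        (Real.cos t - (Real.exp (p * Real.cos t) * (p * -Real.sin t) * Real.sin (t - p * Real.sin t)
          + Real.exp (p * Real.cos t) * (Real.cos (t - p * Real.sin t) * (1 - p * Real.cos t)))) t := by
      have hne : num = fun t => Real.sin t - Real.exp (p * Real.cos t) * Real.sin (t - p * Real.sin t) :=
        funext hnum
      rw [hne]
      have h1 : HasDerivAt (fun t : ℝ => p * Real.cos t) (p * -Real.sin t) t :=
        (Real.hasDerivAt_cos t).const_mul p
      have h2 := h1.exp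
      have h3 : HasDerivAt (fun t : ℝ => t - p * Real.sin t) (1 - p * Real.cos t) t :=
        (hasDerivAt_id t).sub ((Real.hasDerivAt_sin t).const_mul p)
      exact (Real.hasDerivAt_sin t).sub (h2.mul h3.sin)
    have hden' : HasDerivAt den
        (Real.cos t - (Real.exp (-(p * Real.cos t)) * -(p * -Real.sin t) * Real.sin (t + p * Real.sin t)
          + Real.exp (-(p * Real.cos t)) * (Real.cos (t + p * Real.sin t) * (1 + p * Real.cos t)))) t := by
      have hne : den = fun t => Real.sin t - Real.exp (-(p * Real.cos t)) * Real.sin (t + p * Real.sin t) :=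
        funext hden
      rw [hne]
      have h1 : HasDerivAt (fun t : ℝ => p * Real.cos t) (p * -Real.sin t) t :=
        (Real.hasDerivAt_cos t).const_mul p
      have h2 := h1.neg.exp
      have h3 : HasDerivAt (fun t : ℝ => t + p * Real.sin t) (1 + p * Real.cos t) t :=
        (hasDerivAt_id t).add ((Real.hasDerivAt_sin t).const_mul p)
      exact (Real.hasDerivAt_sin t).sub (h2.mul h3.sin)
    have hfd : f = fun t => -(num t) / den t := funext hf
    have hfder := hnum'.neg.div hden' (ne_of_gt hdenPos)
    rw [show (-num / den) = f from hfd.symm] at hfder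
    have hkey : HasDerivAt f
        ((Real.sin (p * Real.sin t) - p * Real.sin t * Real.cos (p * Real.sin t)) *
            (Real.exp (p * Real.cos t) + Real.exp (-(p * Real.cos t)) -
              2 * Real.cos (p * Real.sin t)) / (den t) ^ 2) t := by
      refine hfder.congr_deriv ?_
      symm
      congr 1
      rw [Pi.neg_apply]
      rw [hnum, hden, Real.sin_sub t (p * Real.sin t), Real.cos_sub t (p * Real.sin t),
        Real.sin_add t (p * Real.sin t), Real.cos_add t (p * Real.sin t)]
      have hEF : Real.exp (p * Real.cos t) * Real.exp (-(p * Real.cos t)) = 1 := by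
        rw [← Real.exp_add]; simp
      linear_combination
        (2 * Real.cos t ^ 2 * Real.sin (p * Real.sin t) * Real.cos (p * Real.sin t)
          - 2 * Real.sin t * Real.cos t ^ 2 * Real.cos (p * Real.sin t) ^ 2 * p
          + 2 * Real.sin t ^ 2 * Real.sin (p * Real.sin t) * Real.cos (p * Real.sin t)
          - 2 * Real.sin t ^ 3 * Real.cos (p * Real.sin t) ^ 2 * p) * hEF
        + (2 * Real.sin (p * Real.sin t) * Real.cos (p * Real.sin t)
          - Real.exp (-(p * Real.cos t)) * Real.sin (p * Real.sin t)
          - Real.exp (p * Real.cos t) * Real.sin (p * Real.sin t)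
          - 2 * Real.sin t * Real.cos (p * Real.sin t) ^ 2 * p
          + Real.sin t * Real.exp (-(p * Real.cos t)) * Real.cos (p * Real.sin t) * p
          + Real.sin t * Real.exp (p * Real.cos t) * Real.cos (p * Real.sin t) * p) * hsc
    exact ⟨hnumInt, hdenInt, hnumPos, hdenPos, hkey⟩
  refine ⟨main, ?_⟩
  apply strictMonoOn_of_deriv_pos (convex_Ioo 0 Real.pi)
  · intro t ht
    exact ((main t ht).2.2.2.2).differentiableAt.continuousAt.continuousWithinAt
  · intro t ht
    rw [interior_Ioo] at ht
    obtain ⟨-, -, -, hdenPos, hder⟩ := main t ht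
    rw [hder.deriv]
    obtain ⟨ht0, htπ⟩ := ht
    have hst : 0 < Real.sin t := Real.sin_pos_of_pos_of_lt_pi ht0 htπ
    have hps0 : 0 < p * Real.sin t := mul_pos hp0 hst
    have hps : p * Real.sin t < Real.pi := lt_of_le_of_lt
      (by nlinarith [Real.sin_le_one t]) hpπ
    have h1 : 0 < Real.sin (p * Real.sin t) - p * Real.sin t * Real.cos (p * Real.sin t) :=
      auxSinPos _ hps0 hps
    have hC : Real.cos (p * Real.sin t) < 1 := by
      have := Real.cos_lt_cos_of_nonneg_of_le_pi (le_refl 0) hps.le hps0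
      simpa using this
    have hsum : 2 ≤ Real.exp (p * Real.cos t) + Real.exp (-(p * Real.cos t)) := by
      have hE := Real.exp_pos (p * Real.cos t)
      have hEF : Real.exp (p * Real.cos t) * Real.exp (-(p * Real.cos t)) = 1 := by
        rw [← Real.exp_add]; simp
      nlinarith [sq_nonneg (Real.exp (p * Real.cos t) - 1)]
    have h2 : 0 < Real.exp (p * Real.cos t) + Real.exp (-(p * Real.cos t)) -
        2 * Real.cos (p * Real.sin t) := by linarith
    positivity
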